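/- Let g = [[a, b], [c, d]] be an integer matrix with ad − bc = 1 and c > 0. Suppose there exist rational numbers x, y with 0 ≤ x < y ≤ 1 such that cx + d ≠ 0, cy + d ≠ 0, and 0 ≤ (ay + b)/(cy + d) < (ax + b)/(cx + d) ≤ 1. Then |a + d| ≤ c − 2 and √(a² + b² + c² + d²) < 2c − 1. -/
import Mathlib


/-- **Lemma.** Let `g = [[a, b], [c, d]]` be an integer matrix with `ad − bc = 1` and `c > 0`.
If there exist rationals `0 ≤ x < y ≤ 1` with `cx + d ≠ 0`, `cy + d ≠ 0` and
`0 ≤ g(y) < g(x) ≤ 1` (Möbius action), then `|tr g| = |a + d| ≤ c − 2` and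
`‖g‖_F = √(a² + b² + c² + d²) < 2c − 1`. -/
theorem stmt14 (a b c d : ℤ) (hdet : a * d - b * c = 1) (hc : 0 < c)
    (x y : ℚ) (hx : 0 ≤ x) (hxy : x < y) (hy : y ≤ 1)
    (hdx : (c : ℚ) * x + d ≠ 0) (hdy : (c : ℚ) * y + d ≠ 0)
    (h0 : 0 ≤ ((a : ℚ) * y + b) / ((c : ℚ) * y + d))
    (h1 : ((a : ℚ) * y + b) / ((c : ℚ) * y + d) < ((a : ℚ) * x + b) / ((c : ℚ) * x + d))
    (h2 : ((a : ℚ) * x + b) / ((c : ℚ) * x + d) ≤ 1) :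
    |a + d| ≤ c - 2 ∧
      Real.sqrt ((a : ℝ) ^ 2 + (b : ℝ) ^ 2 + (c : ℝ) ^ 2 + (d : ℝ) ^ 2) < 2 * (c : ℝ) - 1 := by
  have hdetQ : (a:ℚ)*d - b*c = 1 := by exact_mod_cast hdet
  have hcQ : (0:ℚ) < c := by exact_mod_cast hc
  set X : ℚ := (c:ℚ)*x+d with hXdef
  set Y : ℚ := (c:ℚ)*y+d with hYdef
  set U : ℚ := (a:ℚ)*x+b with hUdef
  set V : ℚ := (a:ℚ)*y+b with hVdef
  have key : U*Y - V*X = x - y := by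
    rw [hXdef, hYdef, hUdef, hVdef]; linear_combination (x - y) * hdetQ
  have h3 : U/X - V/Y = (x - y)/(X*Y) := by
    rw [div_sub_div _ _ hdx hdy]
    congr 1
    linear_combination key
  have hXY : X*Y < 0 := by
    rcases lt_trichotomy (X*Y) 0 with h | h | h
    · exact h
    · rcases mul_eq_zero.mp h with h' | h' <;> [exact absurd h' hdx; exact absurd h' hdy]
    · exfalso
      have hpos : 0 < U/X - V/Y := by linarith
      rw [h3] at hpos
      have : (x - y)/(X*Y) < 0 := div_neg_of_neg_of_pos (by linarith) h
      linarith
  have hYX : X < Y := by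
    have : Y - X = (c:ℚ)*(y-x) := by rw [hXdef, hYdef]; ring
    nlinarith [mul_pos hcQ (sub_pos.mpr hxy)]
  have hXneg : X < 0 := by nlinarith
  have hYpos : 0 < Y := by nlinarith
  have hV : 0 ≤ V := by
    have h := mul_nonneg h0 hYpos.le
    rwa [div_mul_cancel₀ _ hdy] at h
  have hU : U < 0 := by
    by_contra h
    push_neg at h
    have hle : U / X ≤ 0 := div_nonpos_of_nonneg_of_nonpos h hXneg.le
    linarith [lt_of_le_of_lt h0 h1]
  have hUX : X ≤ U := by
    have h := mul_le_mul_of_nonpos_right h2 hXneg.le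
    rwa [div_mul_cancel₀ _ hdx, one_mul] at h
  have hVY : V < Y := by
    have := lt_of_lt_of_le h1 h2
    exact (div_lt_one hYpos).mp this
  -- integer facts
  have hdQ : (d:ℚ) < 0 := by
    have h := hXneg
    rw [hXdef] at h
    nlinarith [mul_nonneg hcQ.le hx]
  have hcdQ : (0:ℚ) < c + d := by
    have h := hYpos
    rw [hYdef] at h
    nlinarith
  have haQ : (0:ℚ) < a := by
    by_contra h
    push_neg at h
    have h1' : (a:ℚ) * (y - x) ≤ 0 := mul_nonpos_of_nonpos_of_nonneg h (by linarith)
    have h2' : V - U = (a:ℚ)*(y-x) := by rw [hUdef, hVdef]; ring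
    linarith
  have hacQ : (a:ℚ) < c := by
    by_contra h
    push_neg at h
    have h1' : 0 ≤ ((a:ℚ) - c) * (y - x) :=
      mul_nonneg (by linarith) (by linarith)
    have h2' : (V - Y) - (U - X) = ((a:ℚ)-c)*(y-x) := by
      rw [hUdef, hVdef, hXdef, hYdef]; ring
    linarith
  have hbQ : (b:ℚ) < 0 := by
    have h : U = (a:ℚ)*x + b := hUdef
    linarith [hU, mul_nonneg haQ.le hx]
  have habQ : (0:ℚ) ≤ a + b := by
    have h : V = (a:ℚ)*y + b := hVdef
    linarith [hV, mul_le_of_le_one_right haQ.le hy]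
  -- convert to ℤ
  have ha : 1 ≤ a := by exact_mod_cast haQ
  have hd : d ≤ -1 := by
    have : d < 0 := by exact_mod_cast hdQ
    omega
  have hcd : 1 ≤ c + d := by
    have : (0:ℤ) < c + d := by exact_mod_cast hcdQ
    omega
  have hac : a ≤ c - 1 := by
    have : a < c := by exact_mod_cast hacQ
    omega
  have hb : b ≤ -1 := by
    have : b < 0 := by exact_mod_cast hbQ
    omega
  have hab : 0 ≤ a + b := by exact_mod_cast habQ
  have hc2 : 2 ≤ c := by omega
  refine ⟨by rw [abs_le]; omega, ?_⟩
  have hb2 : b^2 ≤ a^2 := sq_le_sq' (by omega) (by omega)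
  have ha2 : a^2 ≤ (c-1)^2 := sq_le_sq' (by omega) (by omega)
  have hd2 : d^2 ≤ (c-1)^2 := sq_le_sq' (by omega) (by omega)
  have e1 : (c-1)^2 = c^2 - 2*c + 1 := by ring
  have e2 : (2*c-1)^2 = 4*c^2 - 4*c + 1 := by ring
  have hsq : a^2 + b^2 + c^2 + d^2 < (2*c-1)^2 := by linarith
  have h2c : (0:ℝ) < 2*(c:ℝ) - 1 := by
    have : (2:ℝ) ≤ c := by exact_mod_cast hc2
    linarith
  rw [show (2*(c:ℝ) - 1) = ((2*c - 1 : ℤ) : ℝ) by push_cast; ring]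
  rw [Real.sqrt_lt' (by exact_mod_cast h2c)]
  exact_mod_cast hsq
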